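/- For every integer n and every complex number z with Re(z) > 0, the Abramowitz function J_n has complex derivative −J_{n−1}(z) at z; that is, the function w ↦ ∫_0^∞ t^n · exp(−t² − w/t) dt has derivative −∫_0^∞ t^{n−1} · exp(−t² − z/t) dt at z. -/

import Mathlib

open MeasureTheory

/-- The Abramowitz function `J_n`. -/
noncomputable def abramowitzJ (n : ℤ) (z : ℂ) : ℂ :=
  ∫ t in Set.Ioi (0 : ℝ), ((t ^ n : ℝ) : ℂ) * Complex.exp (-(t : ℂ) ^ 2 - z / (t : ℂ))

open Real Set

-- real integrand is integrable
lemma abram_aux_integrable (m : ℤ) {c : ℝ} (hc : 0 < c) :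
    IntegrableOn (fun t : ℝ => t ^ m * Real.exp (-t ^ 2 - c / t)) (Set.Ioi 0) := by
  have hcont : ContinuousOn (fun t : ℝ => t ^ m * Real.exp (-t ^ 2 - c / t)) (Set.Ioi 0) := by
    apply ContinuousOn.mul
    · exact continuousOn_id.zpow₀ m (fun t ht => Or.inl (ne_of_gt ht))
    · exact Real.continuous_exp.comp_continuousOn <| ContinuousOn.sub
        (by fun_prop) (continuousOn_const.div continuousOn_id (fun t ht => ne_of_gt ht))
  have hsplit : Set.Ioc (0:ℝ) 1 ∪ Set.Ioi 1 = Set.Ioi (0:ℝ) :=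
    Set.Ioc_union_Ioi_eq_Ioi zero_le_one
  rw [← hsplit]
  apply IntegrableOn.union
  · -- bounded on Ioc 0 1
    set k : ℕ := (-m).toNat with hk
    have hmk : 0 ≤ m + k := by simp [hk]; omega
    refine ⟨(hcont.mono Set.Ioc_subset_Ioi_self).aestronglyMeasurable measurableSet_Ioc,
      HasFiniteIntegral.restrict_of_bounded (C := (k.factorial : ℝ) / c ^ k) measure_Ioc_lt_top ?_⟩
    filter_upwards [ae_restrict_mem measurableSet_Ioc] with t ht
    obtain ⟨ht0, ht1⟩ := ht
    have h1 : Real.exp (-t ^ 2 - c / t) ≤ Real.exp (-(c / t)) := by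
      apply Real.exp_le_exp.2; nlinarith
    have h2 : Real.exp (-(c / t)) ≤ (k.factorial : ℝ) * (t / c) ^ k := by
      have hexp := Real.pow_div_factorial_le_exp (x := c / t) (by positivity) k
      rw [Real.exp_neg, inv_le_iff_one_le_mul₀ (Real.exp_pos _)]
      calc (1:ℝ) = ((c/t)^k / (k.factorial:ℝ)) * ((k.factorial : ℝ) * (t/c)^k) := by
            rw [div_pow, div_pow]; field_simp
          _ ≤ Real.exp (c/t) * ((k.factorial : ℝ) * (t/c)^k) :=
            mul_le_mul_of_nonneg_right hexp (by positivity)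
          _ = (k.factorial : ℝ) * (t/c)^k * Real.exp (c/t) := by ring
    have h3 : t ^ m * Real.exp (-t ^ 2 - c / t) ≤ (k.factorial : ℝ) / c ^ k * t ^ (m + k) := by
      calc t ^ m * Real.exp (-t ^ 2 - c / t) ≤ t ^ m * ((k.factorial : ℝ) * (t / c) ^ k) := by
            apply mul_le_mul_of_nonneg_left (h1.trans h2) (by positivity)
        _ = (k.factorial : ℝ) / c ^ k * t ^ (m + k) := by
            rw [div_pow, zpow_add₀ (ne_of_gt ht0), zpow_natCast]
            field_simp
    have h4 : t ^ (m + k) ≤ 1 := by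
      obtain ⟨j, hj⟩ := Int.eq_ofNat_of_zero_le hmk
      rw [hj, zpow_natCast]
      exact pow_le_one₀ (le_of_lt ht0) ht1
    rw [norm_eq_abs, abs_of_nonneg (by positivity)]
    calc t ^ m * Real.exp (-t ^ 2 - c / t) ≤ (k.factorial : ℝ) / c ^ k * t ^ (m + k) := h3
      _ ≤ (k.factorial : ℝ) / c ^ k * 1 := by
          apply mul_le_mul_of_nonneg_left h4; positivity
      _ = (k.factorial : ℝ) / c ^ k := mul_one _
  · -- on Ioi 1, dominate by t^K * exp(-t²)
    set K : ℕ := m.toNat with hK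
    have hint : IntegrableOn (fun t : ℝ => t ^ (K:ℝ) * Real.exp (-1 * t ^ 2)) (Set.Ioi 1) := by
      apply (integrableOn_rpow_mul_exp_neg_mul_sq one_pos (s := (K:ℝ)) (by linarith [Nat.cast_nonneg (α := ℝ) K])).mono_set
      intro t ht; exact Set.mem_Ioi.2 (lt_trans one_pos (Set.mem_Ioi.1 ht))
    apply Integrable.mono' hint
    · exact (hcont.mono (fun t (ht : t ∈ Set.Ioi (1:ℝ)) => Set.mem_Ioi.2 (lt_trans one_pos (Set.mem_Ioi.1 ht)))).aestronglyMeasurable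
        measurableSet_Ioi
    · filter_upwards [ae_restrict_mem measurableSet_Ioi] with t (ht : 1 < t)
      have ht0 : (0:ℝ) < t := lt_trans one_pos ht
      rw [norm_eq_abs, abs_of_nonneg (by positivity)]
      have h1 : t ^ m ≤ t ^ (K:ℝ) := by
        rw [Real.rpow_natCast]
        calc t ^ m ≤ t ^ (K:ℤ) := zpow_le_zpow_right₀ (le_of_lt ht) (Int.self_le_toNat m)
          _ = t ^ K := zpow_natCast t K
      have h2 : Real.exp (-t ^ 2 - c / t) ≤ Real.exp (-1 * t ^ 2) := by
        apply Real.exp_le_exp.2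
        have : 0 < c / t := by positivity
        nlinarith
      exact mul_le_mul h1 h2 (by positivity) (by positivity)



lemma abram_norm (m : ℤ) (w : ℂ) {t : ℝ} (ht : 0 < t) :
    ‖((t ^ m : ℝ) : ℂ) * Complex.exp (-(t:ℂ) ^ 2 - w / (t:ℂ))‖
      = t ^ m * Real.exp (-t ^ 2 - w.re / t) := by
  rw [norm_mul, Complex.norm_exp, Complex.norm_real, Real.norm_eq_abs,
    abs_of_nonneg (zpow_nonneg ht.le m)]
  congr 2
  simp [Complex.sub_re, Complex.neg_re, Complex.div_ofReal_re, ← Complex.ofReal_pow]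

lemma abram_meas (m : ℤ) (w : ℂ) :
    AEStronglyMeasurable (fun t : ℝ => ((t ^ m : ℝ) : ℂ) * Complex.exp (-(t:ℂ) ^ 2 - w / (t:ℂ)))
      (volume.restrict (Set.Ioi 0)) := by
  apply ContinuousOn.aestronglyMeasurable _ measurableSet_Ioi
  apply ContinuousOn.mul
  · exact Complex.continuous_ofReal.comp_continuousOn
      (continuousOn_id.zpow₀ m (fun t ht => Or.inl (ne_of_gt ht)))
  · apply Complex.continuous_exp.comp_continuousOn
    apply ContinuousOn.sub (by fun_prop)
    exact continuousOn_const.div (Complex.continuous_ofReal.continuousOn)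
      (fun t ht => Complex.ofReal_ne_zero.2 (ne_of_gt ht))

lemma abram_int (m : ℤ) {w : ℂ} (hw : 0 < w.re) :
    IntegrableOn (fun t : ℝ => ((t ^ m : ℝ) : ℂ) * Complex.exp (-(t:ℂ) ^ 2 - w / (t:ℂ)))
      (Set.Ioi 0) := by
  apply Integrable.mono' (abram_aux_integrable m hw) (abram_meas m w)
  filter_upwards [ae_restrict_mem measurableSet_Ioi] with t ht
  rw [abram_norm m w ht]

theorem abramowitzJ_hasDerivAt (n : ℤ) (z : ℂ) (hz : 0 < z.re) :
    HasDerivAt (abramowitzJ n) (-abramowitzJ (n - 1) z) z := by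
  set ε : ℝ := z.re / 2 with hε_def
  have hε : 0 < ε := by positivity
  have key := hasDerivAt_integral_of_dominated_loc_of_deriv_le
    (μ := volume.restrict (Set.Ioi 0)) (x₀ := z)
    (F := fun w (t : ℝ) => ((t ^ n : ℝ) : ℂ) * Complex.exp (-(t:ℂ) ^ 2 - w / (t:ℂ)))
    (F' := fun w (t : ℝ) => -((t ^ (n - 1) : ℝ) : ℂ) * Complex.exp (-(t:ℂ) ^ 2 - w / (t:ℂ)))
    (bound := fun t : ℝ => t ^ (n - 1) * Real.exp (-t ^ 2 - ε / t))
    (s := Metric.ball z ε) (Metric.ball_mem_nhds z hε)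
    (Filter.Eventually.of_forall fun w => abram_meas n w)
    (abram_int n hz)
    ((abram_meas (n - 1) z).neg.congr (by
      filter_upwards with t
      simp [neg_mul]))
    ?_ (abram_aux_integrable (n - 1) hε) ?_
  · have h1 : (fun w => ∫ t in Set.Ioi (0:ℝ),
        ((t ^ n : ℝ) : ℂ) * Complex.exp (-(t:ℂ) ^ 2 - w / (t:ℂ))) = abramowitzJ n := rfl
    have h2 : (∫ t in Set.Ioi (0:ℝ),
        -((t ^ (n - 1) : ℝ) : ℂ) * Complex.exp (-(t:ℂ) ^ 2 - z / (t:ℂ)))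
        = -abramowitzJ (n - 1) z := by
      simp_rw [neg_mul]
      rw [abramowitzJ, ← integral_neg]
    rw [← h1, ← h2]
    exact key.2
  · -- bound
    filter_upwards [ae_restrict_mem measurableSet_Ioi] with t (ht : 0 < t) w hw
    have hwre : ε ≤ w.re := by
      have h := Complex.abs_re_le_norm (w - z)
      rw [Complex.sub_re] at h
      have : ‖w - z‖ < ε := by
        rw [← Complex.dist_eq]
        exact Metric.mem_ball.1 hw
      have := (abs_lt.1 (lt_of_le_of_lt h this)).1
      simp only [hε_def] at *
      linarith
    rw [neg_mul, norm_neg, abram_norm (n - 1) w ht]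
    apply mul_le_mul_of_nonneg_left _ (zpow_nonneg ht.le _)
    apply Real.exp_le_exp.2
    have hdiv : ε / t ≤ w.re / t := by gcongr
    linarith
  · -- differentiability
    filter_upwards [ae_restrict_mem measurableSet_Ioi] with t (ht : 0 < t) w hw
    have htC : (t : ℂ) ≠ 0 := Complex.ofReal_ne_zero.2 (ne_of_gt ht)
    have h0 : HasDerivAt (fun w : ℂ => -(t:ℂ) ^ 2 - w / (t:ℂ)) (-(1 / (t:ℂ))) w := by
      simpa using ((hasDerivAt_id w).div_const (t:ℂ)).const_sub (-(t:ℂ) ^ 2)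
    have h1 := (h0.cexp).const_mul ((t ^ n : ℝ) : ℂ)
    refine h1.congr_deriv ?_
    rw [zpow_sub_one₀ (ne_of_gt ht) n]
    push_cast
    field_simp
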